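/- For every real t > 0, the modified Bessel function K₀(t) := ∫₀^∞ exp(-t·cosh x) dx satisfies the differential equation t·(t·K₀''(t) + K₀'(t)) - t²·K₀(t) = 0. -/

import Mathlib

open MeasureTheory

noncomputable def K₀ (t : ℝ) : ℝ := ∫ x in Set.Ioi (0:ℝ), Real.exp (-t * Real.cosh x)

open Real Filter Set in
private lemma pow_le_fact_exp (n : ℕ) {y : ℝ} (hy : 0 ≤ y) : y ^ n ≤ (n.factorial : ℝ) * Real.exp y := by
  have h := Real.sum_le_exp_of_nonneg hy (n + 1)
  have h2 : y ^ n / (n.factorial : ℝ) ≤ ∑ i ∈ Finset.range (n + 1), y ^ i / (i.factorial : ℝ) :=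
    Finset.single_le_sum (f := fun i => y ^ i / (i.factorial : ℝ)) (fun i _ => by positivity) (Finset.self_mem_range_succ n)
  have hn : (0:ℝ) < (n.factorial : ℝ) := by positivity
  have := (div_le_iff₀ hn).mp (h2.trans h)
  linarith

open Real Filter Set in
private lemma le_cosh {x : ℝ} (hx : 0 ≤ x) : x ≤ Real.cosh x := by
  rcases eq_or_lt_of_le hx with h | h
  · rw [← h]; exact (Real.cosh_pos (x := 0)).le
  · exact le_trans (Real.self_lt_sinh_iff.mpr h).le (Real.sinh_lt_cosh x).le

open Real Filter Set in
private lemma cont_integrand (n : ℕ) (s : ℝ) :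
    Continuous (fun x : ℝ => Real.cosh x ^ n * Real.exp (-s * Real.cosh x)) :=
  (Real.continuous_cosh.pow n).mul
    (Real.continuous_exp.comp (continuous_const.mul Real.continuous_cosh))

open Real Filter Set in
private lemma integrable_coshpow (n : ℕ) {c : ℝ} (hc : 0 < c) :
    IntegrableOn (fun x => Real.cosh x ^ n * Real.exp (-c * Real.cosh x)) (Ioi (0:ℝ)) := by
  have hg : IntegrableOn (fun x => ((n.factorial : ℝ) * (2 / c) ^ n) * Real.exp (-(c / 2) * x)) (Ioi (0:ℝ)) :=
    (exp_neg_integrableOn_Ioi 0 (by positivity)).const_mul _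
  refine hg.mono' ((cont_integrand n c).aestronglyMeasurable.restrict) ?_
  rw [ae_restrict_iff' measurableSet_Ioi]
  refine ae_of_all _ fun x hx => ?_
  have hx0 : (0:ℝ) ≤ x := (le_of_lt hx)
  have hch : (0:ℝ) < Real.cosh x := Real.cosh_pos x
  have hxle : x ≤ Real.cosh x := le_cosh hx0
  have key : Real.cosh x ^ n ≤ (n.factorial : ℝ) * (2 / c) ^ n * Real.exp (c / 2 * Real.cosh x) := by
    have h1 := pow_le_fact_exp n (y := c / 2 * Real.cosh x) (by positivity)
    have h2 : (c / 2 * Real.cosh x) ^ n = (c / 2) ^ n * Real.cosh x ^ n := by ring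
    rw [h2] at h1
    have hcp : (0:ℝ) < (c / 2) ^ n := by positivity
    calc Real.cosh x ^ n = ((c / 2) ^ n * Real.cosh x ^ n) / (c / 2) ^ n := by
            field_simp
      _ ≤ ((n.factorial : ℝ) * Real.exp (c / 2 * Real.cosh x)) / (c / 2) ^ n := by
            gcongr
      _ = (n.factorial : ℝ) * (2 / c) ^ n * Real.exp (c / 2 * Real.cosh x) := by
            rw [div_eq_mul_inv, ← inv_pow]
            have : ((c:ℝ) / 2)⁻¹ = 2 / c := by field_simp
            rw [this]; ring
  have hnorm : ‖Real.cosh x ^ n * Real.exp (-c * Real.cosh x)‖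
      = Real.cosh x ^ n * Real.exp (-c * Real.cosh x) := by
    rw [Real.norm_eq_abs, abs_of_nonneg (by positivity)]
  rw [hnorm]
  calc Real.cosh x ^ n * Real.exp (-c * Real.cosh x)
      ≤ ((n.factorial : ℝ) * (2 / c) ^ n * Real.exp (c / 2 * Real.cosh x)) * Real.exp (-c * Real.cosh x) := by
        exact mul_le_mul_of_nonneg_right key (Real.exp_pos _).le
    _ = (n.factorial : ℝ) * (2 / c) ^ n * Real.exp (-(c / 2) * Real.cosh x) := by
        rw [mul_assoc, ← Real.exp_add]; ring_nf
    _ ≤ (n.factorial : ℝ) * (2 / c) ^ n * Real.exp (-(c / 2) * x) := by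
        have : Real.exp (-(c / 2) * Real.cosh x) ≤ Real.exp (-(c / 2) * x) := by
          apply Real.exp_le_exp.mpr
          nlinarith
        exact mul_le_mul_of_nonneg_left this (by positivity)

open Real Filter Set in
noncomputable def Ibes (n : ℕ) (s : ℝ) : ℝ :=
  ∫ x in Ioi (0:ℝ), Real.cosh x ^ n * Real.exp (-s * Real.cosh x)

open Real Filter Set Metric in
private lemma hasDeriv_Ibes (n : ℕ) {t : ℝ} (ht : 0 < t) :
    HasDerivAt (Ibes n) (-(Ibes (n + 1) t)) t := by
  have h := hasDerivAt_integral_of_dominated_loc_of_deriv_le (s := ball t (t / 2))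
      (μ := volume.restrict (Ioi (0:ℝ)))
      (F := fun s x => Real.cosh x ^ n * Real.exp (-s * Real.cosh x))
      (F' := fun s x => -(Real.cosh x ^ (n + 1) * Real.exp (-s * Real.cosh x)))
      (x₀ := t)
      (bound := fun x => Real.cosh x ^ (n + 1) * Real.exp (-(t / 2) * Real.cosh x))
      (ball_mem_nhds t (by positivity))
      (Eventually.of_forall fun s => (cont_integrand n s).aestronglyMeasurable.restrict)
      (integrable_coshpow n ht)
      (((cont_integrand (n + 1) t).neg).aestronglyMeasurable.restrict)
      ?_ (integrable_coshpow (n + 1) (by positivity)) ?_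
  · have : (∫ x in Ioi (0:ℝ), -(Real.cosh x ^ (n + 1) * Real.exp (-t * Real.cosh x)))
        = -(Ibes (n + 1) t) := by
      rw [integral_neg]; rfl
    rw [this] at h
    exact h.2
  · refine ae_of_all _ fun x s hs => ?_
    have hs2 : t / 2 ≤ s := by
      have := abs_lt.mp (mem_ball_iff_norm.mp hs)
      linarith [this.1, this.2]
    have hch : (0:ℝ) < Real.cosh x := Real.cosh_pos x
    have : ‖-(Real.cosh x ^ (n + 1) * Real.exp (-s * Real.cosh x))‖
        = Real.cosh x ^ (n + 1) * Real.exp (-s * Real.cosh x) := by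
      rw [norm_neg, Real.norm_eq_abs, abs_of_nonneg (by positivity)]
    rw [this]
    have : Real.exp (-s * Real.cosh x) ≤ Real.exp (-(t / 2) * Real.cosh x) := by
      apply Real.exp_le_exp.mpr; nlinarith
    exact mul_le_mul_of_nonneg_left this (by positivity)
  · refine ae_of_all _ fun x s _ => ?_
    have h1 : HasDerivAt (fun s : ℝ => -s * Real.cosh x) (-Real.cosh x) s := by
      simpa using (hasDerivAt_id s).neg.mul_const (Real.cosh x)
    have h2 := h1.exp
    have h3 := h2.const_mul (Real.cosh x ^ n)
    have heq : -(Real.cosh x ^ (n + 1) * Real.exp (-s * Real.cosh x))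
        = Real.cosh x ^ n * (Real.exp (-s * Real.cosh x) * -Real.cosh x) := by
      rw [pow_succ]; ring
    convert h3 using 1
    rfl

open Real Filter Set in
private lemma deriv_K₀_eq {t : ℝ} (ht : 0 < t) : deriv K₀ t = -(Ibes 1 t) := by
  have hK : K₀ = Ibes 0 := by
    funext s
    unfold K₀ Ibes
    simp
  rw [hK]
  exact (hasDeriv_Ibes 0 ht).deriv

open Real Filter Set in
theorem bessel_ode (t : ℝ) (ht : 0 < t) :
    t * (t * deriv (deriv K₀) t + deriv K₀ t) - t ^ 2 * K₀ t = 0 := by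
  have hK : K₀ t = Ibes 0 t := by unfold K₀ Ibes; simp
  have hd1 : deriv K₀ t = -(Ibes 1 t) := deriv_K₀_eq ht
  have hd2 : deriv (deriv K₀) t = Ibes 2 t := by
    have hev : deriv K₀ =ᶠ[nhds t] (fun s => -(Ibes 1 s)) := by
      filter_upwards [Ioi_mem_nhds ht] with s hs
      exact deriv_K₀_eq hs
    rw [hev.deriv_eq]
    have := ((hasDeriv_Ibes 1 ht).neg).deriv
    simpa using this
  rw [hK, hd1, hd2]
  -- now show t * (t * Ibes 2 t + -(Ibes 1 t)) - t ^ 2 * Ibes 0 t = 0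
  -- via FTC: ∫ (t² sinh² - t cosh) e^{-t cosh} = 0
  set f : ℝ → ℝ := fun x => -t * Real.sinh x * Real.exp (-t * Real.cosh x) with hf
  set f' : ℝ → ℝ := fun x =>
    t ^ 2 * (Real.sinh x ^ 2 * Real.exp (-t * Real.cosh x))
      - t * (Real.cosh x * Real.exp (-t * Real.cosh x)) with hf'
  have hderiv : ∀ x ∈ Ioi (0:ℝ), HasDerivAt f (f' x) x := by
    intro x _
    have h1 : HasDerivAt (fun x : ℝ => -t * Real.sinh x) (-t * Real.cosh x) x :=
      (Real.hasDerivAt_sinh x).const_mul (-t)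
    have h2 : HasDerivAt (fun x : ℝ => -t * Real.cosh x) (-t * Real.sinh x) x :=
      (Real.hasDerivAt_cosh x).const_mul (-t)
    have h3 := h2.exp
    have h4 := h1.mul h3
    convert h4 using 1
    · rfl
    · rfl
    · rfl
    · simp only [hf']
      ring
  have hsinh2_int : IntegrableOn (fun x => Real.sinh x ^ 2 * Real.exp (-t * Real.cosh x))
      (Ioi (0:ℝ)) := by
    refine (integrable_coshpow 2 ht).mono'
      (((Real.continuous_sinh.pow 2).mul
        (Real.continuous_exp.comp (continuous_const.mul Real.continuous_cosh))).aestronglyMeasurable.restrict) ?_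
    refine ae_of_all _ fun x => ?_
    have h1 : |Real.sinh x| ≤ Real.cosh x := by
      rw [abs_le]
      constructor
      · have := Real.sinh_lt_cosh (-x)
        rw [Real.sinh_neg, Real.cosh_neg] at this
        linarith
      · exact (Real.sinh_lt_cosh x).le
    have h2 : Real.sinh x ^ 2 ≤ Real.cosh x ^ 2 := by
      nlinarith [abs_nonneg (Real.sinh x), sq_abs (Real.sinh x)]
    rw [Real.norm_eq_abs, abs_of_nonneg (by positivity)]
    exact mul_le_mul_of_nonneg_right h2 (Real.exp_pos _).le
  have hcosh_int := integrable_coshpow 1 ht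
  simp only [pow_one] at hcosh_int
  have hf'int : IntegrableOn f' (Ioi (0:ℝ)) :=
    (hsinh2_int.const_mul (t ^ 2)).sub (hcosh_int.const_mul t)
  have htend : Tendsto f atTop (nhds 0) := by
    have hcomp : Tendsto (fun x => (t * Real.cosh x) * Real.exp (-(t * Real.cosh x)))
        atTop (nhds 0) := by
      have h1 : Tendsto (fun y : ℝ => y * Real.exp (-y)) atTop (nhds 0) := by
        have := Real.tendsto_pow_mul_exp_neg_atTop_nhds_zero 1
        simpa using this
      have hct : Tendsto Real.cosh atTop atTop := by
        refine tendsto_atTop_mono' atTop ?_ tendsto_id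
        filter_upwards [eventually_ge_atTop (0:ℝ)] with x hx
        exact le_cosh hx
      have h2 : Tendsto (fun x => t * Real.cosh x) atTop atTop := hct.const_mul_atTop ht
      exact h1.comp h2
    refine squeeze_zero_norm (fun x => ?_) hcomp
    have h1 : |Real.sinh x| ≤ Real.cosh x := by
      rw [abs_le]
      constructor
      · have := Real.sinh_lt_cosh (-x)
        rw [Real.sinh_neg, Real.cosh_neg] at this
        linarith
      · exact (Real.sinh_lt_cosh x).le
    have : ‖f x‖ = t * |Real.sinh x| * Real.exp (-t * Real.cosh x) := by
      simp [hf, Real.norm_eq_abs, abs_mul, abs_neg, abs_of_pos ht, abs_of_pos (Real.exp_pos _)]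
    rw [this]
    have hneg : -(t * Real.cosh x) = -t * Real.cosh x := by ring
    rw [← hneg]
    have := mul_le_mul_of_nonneg_right (mul_le_mul_of_nonneg_left h1 ht.le)
      (Real.exp_pos (-(t * Real.cosh x))).le
    calc t * |Real.sinh x| * Real.exp (-(t * Real.cosh x))
        ≤ t * Real.cosh x * Real.exp (-(t * Real.cosh x)) := this
      _ = t * Real.cosh x * Real.exp (-(t * Real.cosh x)) := rfl
  have hcont : ContinuousWithinAt f (Ici (0:ℝ)) 0 := by
    have : Continuous f :=
      (continuous_const.mul Real.continuous_sinh).mul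
        (Real.continuous_exp.comp (continuous_const.mul Real.continuous_cosh))
    exact this.continuousWithinAt
  have hFTC := integral_Ioi_of_hasDerivAt_of_tendsto hcont hderiv hf'int htend
  have hf0 : f 0 = 0 := by simp [hf]
  rw [hf0, sub_zero] at hFTC
  -- hFTC : ∫ x in Ioi 0, f' x = 0
  have hsplit : ∫ x in Ioi (0:ℝ), f' x
      = t ^ 2 * (∫ x in Ioi (0:ℝ), Real.sinh x ^ 2 * Real.exp (-t * Real.cosh x))
        - t * Ibes 1 t := by
    rw [integral_sub ((hsinh2_int.const_mul (t ^ 2))) ((hcosh_int.const_mul t)),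
      integral_const_mul, integral_const_mul]
    unfold Ibes
    simp [pow_one]
  have hsinh_eq : (∫ x in Ioi (0:ℝ), Real.sinh x ^ 2 * Real.exp (-t * Real.cosh x))
      = Ibes 2 t - Ibes 0 t := by
    have hpt : ∀ x : ℝ, Real.sinh x ^ 2 * Real.exp (-t * Real.cosh x)
        = Real.cosh x ^ 2 * Real.exp (-t * Real.cosh x)
          - Real.cosh x ^ 0 * Real.exp (-t * Real.cosh x) := by
      intro x
      simp only [pow_zero, one_mul]
      rw [Real.cosh_sq]; ring
    rw [show (fun x => Real.sinh x ^ 2 * Real.exp (-t * Real.cosh x)) = fun x =>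
        Real.cosh x ^ 2 * Real.exp (-t * Real.cosh x)
          - Real.cosh x ^ 0 * Real.exp (-t * Real.cosh x) from funext hpt]
    rw [integral_sub (integrable_coshpow 2 ht) (integrable_coshpow 0 ht)]
    rfl
  rw [hsinh_eq] at hsplit
  rw [hsplit] at hFTC
  linarith [hFTC]
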